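/- Let n ≥ 3 and define T_n : 𝔽₂ⁿ → 𝔽₂ⁿ as the SDS map [C_n, (1+parity)₃, id], i.e., T_n(v) = L_n(v) + u_n where L_n(y₁,...,y_n) = (y₁+y₂+y_n, ..., y₁+y_{n−1}+y_n, y₁, y₂) and u_n = (γ₁, γ₂, ..., γ_{n−1}, γ_{n−1}) with γᵢ = 1 if i is odd and γᵢ = 0 if i is even. Then T_n has a fixed point if and only if 4 divides n. -/
import Mathlib


/-- The SDS map `[C_n, parity₃, id]` as an `𝔽₂`-linear map on `𝔽₂ⁿ` (`n ≥ 3`). -/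
def Lmap (n : ℕ) (hn : 3 ≤ n) : (Fin n → ZMod 2) →ₗ[ZMod 2] (Fin n → ZMod 2) where
  toFun y i :=
    if h : (i : ℕ) < n - 2 then
      y ⟨0, by omega⟩ + y ⟨(i : ℕ) + 1, by omega⟩ + y ⟨n - 1, by omega⟩
    else if (i : ℕ) = n - 2 then y ⟨0, by omega⟩ else y ⟨1, by omega⟩
  map_add' x y := by
    funext i; simp only [Pi.add_apply]; split_ifs <;> ring
  map_smul' c x := by
    funext i; simp only [Pi.smul_apply, smul_eq_mul, RingHom.id_apply]; split_ifs <;> ring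

/-- The translation vector `u_n = (γ₁, …, γ_{n−1}, γ_{n−1})`, where `γᵢ = 1` iff
`i` is odd (entries indexed from 1). -/
def uVec (n : ℕ) : Fin n → ZMod 2 := fun j =>
  if (j : ℕ) < n - 1 then (if Odd ((j : ℕ) + 1) then 1 else 0)
  else (if Odd (n - 1) then 1 else 0)

lemma Lmap_apply_lt (n : ℕ) (hn : 3 ≤ n) (y : Fin n → ZMod 2) (i : ℕ)
    (hi : i < n - 2) (hi' : i < n) :
    Lmap n hn y ⟨i, hi'⟩ =
      y ⟨0, by omega⟩ + y ⟨i + 1, by omega⟩ + y ⟨n - 1, by omega⟩ := by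
  simp only [Lmap, LinearMap.coe_mk, AddHom.coe_mk]
  rw [dif_pos hi]

lemma Lmap_apply_pen (n : ℕ) (hn : 3 ≤ n) (y : Fin n → ZMod 2) :
    Lmap n hn y ⟨n - 2, by omega⟩ = y ⟨0, by omega⟩ := by
  simp only [Lmap, LinearMap.coe_mk, AddHom.coe_mk]
  rw [dif_neg (by omega)]
  simp

lemma Lmap_apply_last (n : ℕ) (hn : 3 ≤ n) (y : Fin n → ZMod 2) :
    Lmap n hn y ⟨n - 1, by omega⟩ = y ⟨1, by omega⟩ := by
  simp only [Lmap, LinearMap.coe_mk, AddHom.coe_mk]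
  rw [dif_neg (by omega), if_neg (by omega)]

lemma uVec_apply_lt (n : ℕ) (i : ℕ) (hi : i < n - 1) (hi' : i < n) :
    uVec n ⟨i, hi'⟩ = if Even i then 1 else 0 := by
  simp only [uVec]
  rw [if_pos hi]
  simp [Nat.odd_add_one, Nat.not_odd_iff_even]

lemma uVec_apply_last (n : ℕ) (hn : 3 ≤ n) :
    uVec n ⟨n - 1, by omega⟩ = if Odd (n - 1) then 1 else 0 := by
  simp only [uVec]
  rw [if_neg (by omega)]

lemma natCast_zmod2 (k : ℕ) : ((k : ZMod 2)) = if Even k then 0 else 1 := by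
  rw [← ZMod.natCast_mod k 2]
  rcases Nat.even_or_odd k with hk | hk
  · rw [Nat.even_iff.mp hk]; simp [hk]
  · rw [Nat.odd_iff.mp hk]; simp [Nat.not_even_iff_odd.mpr hk]

/-- The SDS map `[C_n, (1+parity)₃, id]`, i.e. `T_n(v) = L_n(v) + u_n`, has a
fixed point if and only if `4 ∣ n`. -/
theorem stmt17 (n : ℕ) (hn : 3 ≤ n) :
    (∃ c : Fin n → ZMod 2, Lmap n hn c + uVec n = c) ↔ 4 ∣ n := by
  constructor
  · rintro ⟨c, h⟩
    have hp : ∀ i : Fin n, Lmap n hn c i + uVec n i = c i := fun i => congrFun h i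
    have e1 : ∀ (i : ℕ) (hi : i < n - 2),
        c ⟨0, by omega⟩ + c ⟨i + 1, by omega⟩ + c ⟨n - 1, by omega⟩
          + (if Even i then 1 else 0) = c ⟨i, by omega⟩ := by
      intro i hi
      have := hp ⟨i, by omega⟩
      rwa [Lmap_apply_lt n hn c i hi, uVec_apply_lt n i (by omega)] at this
    have e2 : c ⟨0, by omega⟩ + (if Odd (n - 1) then 1 else 0) = c ⟨n - 2, by omega⟩ := by
      have := hp ⟨n - 2, by omega⟩
      rw [Lmap_apply_pen n hn c, uVec_apply_lt n (n - 2) (by omega)] at this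
      rwa [show (if Even (n - 2) then (1 : ZMod 2) else 0)
            = if Odd (n - 1) then 1 else 0 by
          have : Odd (n - 1) ↔ Even (n - 2) := by
            constructor
            · rintro ⟨t, ht⟩; exact ⟨t, by omega⟩
            · rintro ⟨t, ht⟩; exact ⟨t, by omega⟩
          rcases Nat.even_or_odd (n - 2) with h' | h' <;>
            simp [h', this, Nat.not_even_iff_odd.mpr] ] at this
    have e3 : c ⟨1, by omega⟩ + (if Odd (n - 1) then 1 else 0) = c ⟨n - 1, by omega⟩ := by
      have := hp ⟨n - 1, by omega⟩
      rwa [Lmap_apply_last n hn c, uVec_apply_last n hn] at this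
    -- step 1 : n is even
    have hodd : Odd (n - 1) := by
      by_contra hno
      rw [if_neg hno] at e3
      have h0 := e1 0 (by omega)
      rw [if_pos (by decide)] at h0
      exact (by decide :
        ∀ x y z : ZMod 2, y + 0 = z → x + y + z + 1 = x → False)
        _ _ _ e3 h0
    rw [if_pos hodd] at e2 e3
    -- step 2 : telescoping sum
    have main : ∀ k, ∀ hk : k ≤ n - 2,
        c ⟨0, by omega⟩ + c ⟨k, by omega⟩
          = (k : ZMod 2) * c ⟨0, by omega⟩ + (k : ZMod 2) * c ⟨n - 1, by omega⟩
            + (((k + 1) / 2 : ℕ) : ZMod 2) := by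
      intro k
      induction k with
      | zero => intro _; simp [CharTwo.add_self_eq_zero]
      | succ k ih =>
        intro hk
        have hk' : k < n - 2 := by omega
        have ihk := ih (by omega)
        have eq1 := e1 k hk'
        have hcast : ((k + 1 : ℕ) : ZMod 2) = (k : ZMod 2) + 1 := by push_cast; ring
        rcases Nat.even_or_odd k with hke | hko
        · rw [if_pos hke] at eq1
          have h2 : ((k + 1 + 1) / 2 : ℕ) = (k + 1) / 2 + 1 := by
            obtain ⟨t, rfl⟩ := hke; omega
          rw [h2, hcast]
          push_cast
          exact (by decide : ∀ x y z w K S : ZMod 2,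
              x + w = K * x + K * z + S → x + y + z + 1 = w →
              x + y = (K + 1) * x + (K + 1) * z + (S + 1)) _ _ _ _ _ _ ihk eq1
        · rw [if_neg (Nat.not_even_iff_odd.mpr hko)] at eq1
          have h2 : ((k + 1 + 1) / 2 : ℕ) = (k + 1) / 2 := by
            obtain ⟨t, rfl⟩ := hko; omega
          rw [h2, hcast]
          exact (by decide : ∀ x y z w K S : ZMod 2,
              x + w = K * x + K * z + S → x + y + z + 0 = w →
              x + y = (K + 1) * x + (K + 1) * z + S) _ _ _ _ _ _ ihk eq1
    -- step 3 : conclude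
    have hfin := main (n - 2) le_rfl
    have hev : Even (n - 2) := by
      obtain ⟨t, ht⟩ := hodd; exact ⟨t, by omega⟩
    rw [natCast_zmod2 (n - 2), if_pos hev] at hfin
    have hS : (((n - 2 + 1) / 2 : ℕ) : ZMod 2) = 1 :=
      (by decide : ∀ x z w S : ZMod 2,
        x + w = 0 * x + 0 * z + S → x + 1 = w → S = 1) _ _ _ _ hfin e2
    have hSodd : Odd ((n - 2 + 1) / 2) := by
      by_contra hc
      rw [natCast_zmod2, if_pos (Nat.not_odd_iff_even.mp hc)] at hS
      exact (by decide : (0 : ZMod 2) ≠ 1) hS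
    obtain ⟨t, ht⟩ := hodd
    obtain ⟨s, hs⟩ := hSodd
    omega
  · -- converse
    intro hd
    obtain ⟨m, rfl⟩ := hd
    have hm : 1 ≤ m := by omega
    refine ⟨fun j => if (j : ℕ) % 4 = 1 ∨ (j : ℕ) % 4 = 2 then 0 else 1, ?_⟩
    funext i
    obtain ⟨i, hi⟩ := i
    rw [Pi.add_apply]
    rcases lt_trichotomy i (4 * m - 2) with h1 | h1 | h1
    · rw [Lmap_apply_lt (4 * m) hn _ i h1, uVec_apply_lt (4 * m) i (by omega)]
      simp only [Fin.val_mk]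
      have h4 : i % 4 = 0 ∨ i % 4 = 1 ∨ i % 4 = 2 ∨ i % 4 = 3 := by omega
      rcases h4 with h4 | h4 | h4 | h4
      · simp [Nat.even_iff, show (4*m-1) % 4 = 3 from by omega,
          show (i+1) % 4 = 1 from by omega, h4, show i % 2 = 0 from by omega]
        try decide
      · simp [Nat.even_iff, show (4*m-1) % 4 = 3 from by omega,
          show (i+1) % 4 = 2 from by omega, h4, show i % 2 = 1 from by omega]
        try decide
      · simp [Nat.even_iff, show (4*m-1) % 4 = 3 from by omega,
          show (i+1) % 4 = 3 from by omega, h4, show i % 2 = 0 from by omega]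
        try decide
      · simp [Nat.even_iff, show (4*m-1) % 4 = 3 from by omega,
          show (i+1) % 4 = 0 from by omega, h4, show i % 2 = 1 from by omega]
        try decide
    · subst h1
      rw [Lmap_apply_pen (4 * m) hn, uVec_apply_lt (4 * m) _ (by omega)]
      simp only [Fin.val_mk]
      simp [Nat.even_iff, show (4*m-2) % 4 = 2 from by omega,
        show (4*m-2) % 2 = 0 from by omega]
      try decide
    · have h1' : i = 4 * m - 1 := by omega
      subst h1'
      rw [Lmap_apply_last (4 * m) hn, uVec_apply_last (4 * m) hn]
      simp only [Fin.val_mk]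
      simp [Nat.odd_iff, show (4*m-1) % 4 = 3 from by omega,
        show (4*m-1) % 2 = 1 from by omega]
      try decide
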